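/- Let R be a commutative ring, m ∈ ℕ, and Z an m×m matrix over R. Then in the polynomial ring R[u], det(Z − u·I) = ∑_{r=0}^{m} (−1)^r d_r u^r, where d_r = ∑_{R' ⊆ {1,…,m}, |R'| = r} det(Z∖R') and Z∖R' denotes the matrix obtained from Z by deleting the i-th row and i-th column for every i ∈ R'. -/

import Mathlib

open Matrix Polynomial

lemma det_piecewise_one {A : Type*} [CommRing A] {m : ℕ} (s : Finset (Fin m))
    (M : Matrix (Fin m) (Fin m) A) :
    (Matrix.of fun i j => if i ∈ s then (1 : Matrix (Fin m) (Fin m) A) i j else M i j).det =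
      (M.submatrix (fun i : {i // i ∈ sᶜ} => (i : Fin m))
        (fun i : {i // i ∈ sᶜ} => (i : Fin m))).det := by
  classical
  let e : {i // i ∈ s} ⊕ {i // i ∈ sᶜ} ≃ Fin m :=
    (Equiv.sumCongr (Equiv.refl _)
      (Equiv.subtypeEquivRight (fun x => by simp))).trans (Equiv.sumCompl (· ∈ s))
  rw [← Matrix.det_submatrix_equiv_self e]
  have hblock : (Matrix.of fun i j =>
        if i ∈ s then (1 : Matrix (Fin m) (Fin m) A) i j else M i j).submatrix e e =
      Matrix.fromBlocks 1 0
        (Matrix.of fun (i : {i // i ∈ sᶜ}) (j : {i // i ∈ s}) => M (i : Fin m) (j : Fin m))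
        (M.submatrix (fun i : {i // i ∈ sᶜ} => (i : Fin m))
          (fun i : {i // i ∈ sᶜ} => (i : Fin m))) := by
    ext i j
    rcases i with i | i <;> rcases j with j | j
    · simp only [Matrix.submatrix_apply, Matrix.fromBlocks_apply₁₁, Matrix.of_apply, e, Equiv.trans_apply, Equiv.sumCongr_apply, Sum.map_inl, Equiv.refl_apply, Equiv.sumCompl_apply_inl, i.2, if_true, Matrix.one_apply, Subtype.ext_iff]
    · have hj : (↑j : Fin m) ∉ s := Finset.mem_compl.mp j.2
      have hij : (↑i : Fin m) ≠ ↑j := fun h => hj (h ▸ i.2)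
      simp [e, Matrix.one_apply, i.2, hij]
    · have hi : (↑i : Fin m) ∉ s := Finset.mem_compl.mp i.2
      simp [e, hi]
    · have hi : (↑i : Fin m) ∉ s := Finset.mem_compl.mp i.2
      simp [e, hi]
  rw [hblock, Matrix.det_fromBlocks_zero₁₂, Matrix.det_one, one_mul]

theorem stmt4 {R : Type*} [CommRing R] (m : ℕ) (Z : Matrix (Fin m) (Fin m) R) :
    (Z.map C - (X : R[X]) • 1).det =
      ∑ r ∈ Finset.range (m + 1), (-1 : R[X]) ^ r *
        C (∑ R' ∈ Finset.powersetCard r (Finset.univ : Finset (Fin m)),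
            (Z.submatrix (fun i : {i // i ∈ R'ᶜ} => (i : Fin m))
              (fun i : {i // i ∈ R'ᶜ} => (i : Fin m))).det) * X ^ r := by
  classical
  have key : ∀ s : Finset (Fin m),
      (Matrix.detRowAlternating.toMultilinearMap
        (s.piecewise (fun i => (-X : R[X]) • (1 : Matrix (Fin m) (Fin m) R[X]) i)
          (fun i => (Z.map C) i)) : R[X]) =
      (-X) ^ s.card *
        C ((Z.submatrix (fun i : {i // i ∈ sᶜ} => (i : Fin m))
            (fun i : {i // i ∈ sᶜ} => (i : Fin m))).det) := by
    intro s
    have h1 : s.piecewise (fun i => (-X : R[X]) • (1 : Matrix (Fin m) (Fin m) R[X]) i)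
          (fun i => (Z.map C) i) =
        s.piecewise (fun i => (-X : R[X]) •
            (s.piecewise (fun i => (1 : Matrix (Fin m) (Fin m) R[X]) i)
              (fun i => (Z.map C) i)) i)
          (s.piecewise (fun i => (1 : Matrix (Fin m) (Fin m) R[X]) i)
              (fun i => (Z.map C) i)) := by
      ext i j
      by_cases hi : i ∈ s <;> simp [Finset.piecewise, hi]
    rw [h1, Matrix.detRowAlternating.toMultilinearMap.map_piecewise_smul]
    simp only [Finset.prod_const, smul_eq_mul]
    congr 1
    have h2 : (Matrix.detRowAlternating.toMultilinearMap
        (s.piecewise (fun i => (1 : Matrix (Fin m) (Fin m) R[X]) i)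
          (fun i => (Z.map C) i)) : R[X]) =
        (Matrix.of fun i j =>
          if i ∈ s then (1 : Matrix (Fin m) (Fin m) R[X]) i j else (Z.map C) i j).det := by
      have harg : (s.piecewise (fun i => (1 : Matrix (Fin m) (Fin m) R[X]) i)
          (fun i => (Z.map C) i)) = Matrix.of fun i j =>
          if i ∈ s then (1 : Matrix (Fin m) (Fin m) R[X]) i j else (Z.map C) i j := by
        funext i j
        by_cases hi : i ∈ s <;> simp [Finset.piecewise, hi]
      rw [harg]; rfl
    rw [h2, det_piecewise_one]
    have h3 : (Z.map C).submatrix (fun i : {i // i ∈ sᶜ} => (i : Fin m))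
          (fun i : {i // i ∈ sᶜ} => (i : Fin m)) =
        (Z.submatrix (fun i : {i // i ∈ sᶜ} => (i : Fin m))
          (fun i : {i // i ∈ sᶜ} => (i : Fin m))).map C := rfl
    rw [h3, ← RingHom.mapMatrix_apply, ← RingHom.map_det]
  have hsub : Z.map C - (X : R[X]) • 1 =
      Matrix.of fun i => ((fun i => (-X : R[X]) • (1 : Matrix (Fin m) (Fin m) R[X]) i) +
        (fun i => (Z.map C) i)) i := by
    ext i j
    simp [sub_eq_add_neg, add_comm]
  have hdet : (Z.map C - (X : R[X]) • 1).det =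
      Matrix.detRowAlternating.toMultilinearMap
        ((fun i => (-X : R[X]) • (1 : Matrix (Fin m) (Fin m) R[X]) i) +
          (fun i => (Z.map C) i)) := by
    rw [hsub]; rfl
  rw [hdet, Matrix.detRowAlternating.toMultilinearMap.map_add_univ]
  simp only [key]
  rw [← Finset.powerset_univ, Finset.sum_powerset]
  rw [Finset.card_univ, Fintype.card_fin]
  refine Finset.sum_congr rfl fun r hr => ?_
  rw [Finset.sum_congr rfl (fun t ht => by
    rw [(Finset.mem_powersetCard.mp ht).2]), ← Finset.mul_sum, ← map_sum, neg_pow]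
  ring
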